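/- If the total weight Z = ∑_τ w(τ) over all finite planar trees (with weight w(τ) = ∏_v w_{outdeg(v)}) is finite, then Z is the smallest positive solution of z = g(z), where g(x) = ∑_i w_i x^i; equivalently, writing g(x) = 1 + x f(x), Z satisfies f(Z) = 1 - 1/Z. -/

import Mathlib

open scoped ENNReal

/-- Rooted planar trees: a tree is a root together with an ordered (finite) list of
subtrees. -/
inductive PTree where
  | node : List PTree → PTree

/-- The weight of a planar tree: the product over all vertices `v` of `w_{c(v)}`,
where `c(v)` is the number of children of `v`. -/
noncomputable def PTree.weight (w : ℕ → ℝ≥0∞) : PTree → ℝ≥0∞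
  | .node ts => w ts.length * (ts.attach.map fun t => PTree.weight w t.1).prod
decreasing_by
  have := List.sizeOf_lt_of_mem t.2
  simp only [PTree.node.sizeOf_spec]
  omega

def PTree.depth : PTree → ℕ
  | .node ts => (ts.attach.map fun t => PTree.depth t.1).foldr max 0 + 1
decreasing_by
  have := List.sizeOf_lt_of_mem t.2
  simp only [PTree.node.sizeOf_spec]
  omega

lemma PTree.weight_node (w : ℕ → ℝ≥0∞) (ts : List PTree) :
    PTree.weight w (.node ts) = w ts.length * (ts.map (PTree.weight w)).prod := by
  rw [PTree.weight, List.attach_map_val]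

lemma PTree.depth_node (ts : List PTree) :
    PTree.depth (.node ts) = (ts.map PTree.depth).foldr max 0 + 1 := by
  rw [PTree.depth, List.attach_map_val]

lemma foldr_max_le_iff (l : List ℕ) (k : ℕ) :
    l.foldr max 0 ≤ k ↔ ∀ x ∈ l, x ≤ k := by
  induction l with
  | nil => simp
  | cons a l ih => simp [max_le_iff, ih]

lemma depth_node_le_iff (l : List PTree) (k : ℕ) :
    PTree.depth (.node l) ≤ k + 1 ↔ ∀ t ∈ l, PTree.depth t ≤ k := by
  rw [PTree.depth_node, Nat.add_le_add_iff_right, foldr_max_le_iff]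
  simp

def ptreeEquiv : PTree ≃ List PTree where
  toFun t := match t with | .node l => l
  invFun := .node
  left_inv t := by cases t; rfl
  right_inv l := rfl

lemma tsum_ptree (F : PTree → ℝ≥0∞) :
    ∑' τ : PTree, F τ = ∑' l : List PTree, F (.node l) :=
  (ptreeEquiv.symm.tsum_eq F).symm

lemma tsum_fin_prod (h : PTree → ℝ≥0∞) (n : ℕ) :
    ∑' f : Fin n → PTree, ∏ i, h (f i) = (∑' τ, h τ) ^ n := by
  induction n with
  | zero =>
    rw [pow_zero, tsum_eq_single (Fin.elim0 : Fin 0 → PTree)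
      (fun b hb => absurd (funext fun i => i.elim0) hb)]
    simp
  | succ n ih =>
    rw [← (Fin.consEquiv fun _ : Fin (n + 1) => PTree).tsum_eq]
    simp only [Fin.consEquiv_apply]
    rw [ENNReal.tsum_prod']
    have : ∀ (a : PTree) (b : Fin n → PTree),
        ∏ x : Fin (n + 1), h (Fin.cons (α := fun _ => PTree) a b x)
          = h a * ∏ i : Fin n, h (b i) := by
      intro a b
      rw [Fin.prod_univ_succ]
      simp
    simp only [this, ENNReal.tsum_mul_right, ENNReal.tsum_mul_left, ih, pow_succ]
    ring

lemma tsum_list (wn : ℕ → ℝ≥0∞) (h : PTree → ℝ≥0∞) :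
    ∑' l : List PTree, wn l.length * (l.map h).prod
      = ∑' n : ℕ, wn n * (∑' τ, h τ) ^ n := by
  rw [← (List.equivSigmaTuple (α := PTree)).symm.tsum_eq]
  rw [ENNReal.tsum_sigma']
  congr 1
  ext n
  have : ∀ f : Fin n → PTree,
      wn ((List.equivSigmaTuple (α := PTree)).symm ⟨n, f⟩).length
        * (((List.equivSigmaTuple (α := PTree)).symm ⟨n, f⟩).map h).prod
        = wn n * ∏ i, h (f i) := by
    intro f
    simp only [List.equivSigmaTuple_symm_apply]
    rw [List.length_ofFn, List.map_ofFn, List.prod_ofFn]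
    rfl
  simp only [this, ENNReal.tsum_mul_left, tsum_fin_prod]

noncomputable def hk (w : ℕ → ℝ≥0∞) (k : ℕ) (τ : PTree) : ℝ≥0∞ :=
  if τ.depth ≤ k then τ.weight w else 0

lemma hk_succ_node (w : ℕ → ℝ≥0∞) (k : ℕ) (l : List PTree) :
    hk w (k+1) (.node l) = w l.length * (l.map (hk w k)).prod := by
  by_cases hall : ∀ t ∈ l, PTree.depth t ≤ k
  · have h1 : hk w (k+1) (.node l) = PTree.weight w (.node l) :=
      if_pos ((depth_node_le_iff l k).2 hall)
    have h2 : l.map (hk w k) = l.map (PTree.weight w) :=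
      List.map_congr_left fun t ht => if_pos (hall t ht)
    rw [h1, h2, PTree.weight_node]
  · have h1 : hk w (k+1) (.node l) = 0 :=
      if_neg (fun hc => hall ((depth_node_le_iff l k).1 hc))
    push_neg at hall
    obtain ⟨t, ht, hd⟩ := hall
    have h0 : (0 : ℝ≥0∞) ∈ l.map (hk w k) :=
      List.mem_map.2 ⟨t, ht, if_neg (Nat.not_le.mpr hd)⟩
    rw [h1, List.prod_eq_zero h0, mul_zero]

lemma hk_zero (w : ℕ → ℝ≥0∞) (τ : PTree) : hk w 0 τ = 0 := by
  cases τ with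
  | node ts => exact if_neg (by rw [PTree.depth_node]; omega)

lemma hk_le_weight (w : ℕ → ℝ≥0∞) (k : ℕ) (τ : PTree) : hk w k τ ≤ τ.weight w := by
  unfold hk; split <;> simp

lemma hk_eq_weight (w : ℕ → ℝ≥0∞) (k : ℕ) (τ : PTree) (h : τ.depth ≤ k) :
    hk w k τ = τ.weight w := if_pos h

/-- If the total weight `Z = ∑_τ w(τ)` over all finite planar trees is finite, then `Z` is
the smallest positive solution of `z = g(z)` where `g(x) = ∑_i w_i x^i`; equivalently,
writing `g(x) = 1 + x f(x)`, `Z` satisfies `f(Z) = 1 - 1/Z`. -/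
theorem stmt9 (w : ℕ → ℝ≥0∞) (hw0 : w 0 = 1) (hw2 : ∃ i, 2 ≤ i ∧ 0 < w i)
    (g f : ℝ≥0∞ → ℝ≥0∞)
    (hg : ∀ x, g x = ∑' i : ℕ, w i * x ^ i)
    (hf : ∀ x, f x = ∑' i : ℕ, w (i + 1) * x ^ i)
    (Z : ℝ≥0∞) (hZdef : Z = ∑' τ : PTree, PTree.weight w τ) (hZfin : Z < ⊤) :
    (Z = g Z ∧ ∀ z : ℝ≥0∞, 0 < z → z = g z → Z ≤ z) ∧ f Z = 1 - 1 / Z := by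
  -- Z = g Z
  have hZg : Z = g Z := by
    rw [hg]
    conv_lhs => rw [hZdef, tsum_ptree]
    simp only [PTree.weight_node]
    rw [tsum_list, ← hZdef]
  -- minimality
  have hmin : ∀ z : ℝ≥0∞, 0 < z → z = g z → Z ≤ z := by
    intro z _ hz
    have hS : ∀ k, ∑' τ, hk w k τ ≤ z := by
      intro k
      induction k with
      | zero => simp [hk_zero]
      | succ k ih =>
        calc ∑' τ, hk w (k+1) τ = ∑' l : List PTree, hk w (k+1) (.node l) := tsum_ptree _
        _ = ∑' l : List PTree, w l.length * (l.map (hk w k)).prod := by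
            simp only [hk_succ_node]
        _ = ∑' n : ℕ, w n * (∑' τ, hk w k τ) ^ n := tsum_list w _
        _ ≤ ∑' n : ℕ, w n * z ^ n :=
            ENNReal.tsum_le_tsum fun n => mul_le_mul_right (pow_le_pow_left' ih n) _
        _ = z := (hg z ▸ hz).symm
    rw [hZdef, ENNReal.tsum_eq_iSup_sum]
    refine iSup_le fun s => ?_
    calc ∑ τ ∈ s, PTree.weight w τ = ∑ τ ∈ s, hk w (s.sup PTree.depth) τ :=
          Finset.sum_congr rfl fun τ hτ => (hk_eq_weight _ _ _ (Finset.le_sup hτ)).symm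
    _ ≤ ∑' τ, hk w (s.sup PTree.depth) τ := ENNReal.sum_le_tsum s
    _ ≤ z := hS _
  -- 1 ≤ Z
  have hZ1 : 1 ≤ Z := by
    have := ENNReal.le_tsum (f := PTree.weight w) (PTree.node [])
    rw [PTree.weight_node] at this
    rw [hZdef]
    simpa [hw0] using this
  have hZ0 : Z ≠ 0 := fun h => by simp [h] at hZ1
  have hZtop : Z ≠ ⊤ := hZfin.ne
  -- g Z = 1 + f Z * Z
  have hsplit : g Z = 1 + f Z * Z := by
    rw [hg, hf, tsum_eq_zero_add' (ENNReal.summable)]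
    congr 1
    · simp [hw0]
    · simp_rw [pow_succ, ← mul_assoc]
      rw [ENNReal.tsum_mul_right]
  have hkey : f Z * Z = Z - 1 := by
    have h1 : Z = f Z * Z + 1 := by
      conv_lhs => rw [hZg, hsplit]
      exact add_comm _ _
    exact (ENNReal.sub_eq_of_eq_add (by simp) h1).symm
  have hrhs : (1 - 1 / Z) * Z = Z - 1 := by
    rw [ENNReal.sub_mul (fun _ _ => hZtop), one_mul, one_div,
      ENNReal.inv_mul_cancel hZ0 hZtop]
  refine ⟨⟨hZg, hmin⟩, ?_⟩
  have heq : f Z * Z = (1 - 1 / Z) * Z := hkey.trans hrhs.symm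
  have := congrArg (· * Z⁻¹) heq
  simpa [mul_assoc, ENNReal.mul_inv_cancel hZ0 hZtop] using this
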